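/- Fix M > 0 and L > 2M, and let E be the periodic Schwarzschild Ernst potential with mass M and period L. Then E(x,ρ) > 0 for every (x,ρ) with ρ > 0, E(x,0) > 0 whenever M < |x − nL| for all n ∈ ℤ, and E(x,0) = 0 whenever |x − nL| < M for some n ∈ ℤ. -/

import Mathlib

/-- The Schwarzschild Ernst potential with mass `M`:
`E₀(x,ρ) = (r₁ + r₂ − 2M)/(r₁ + r₂ + 2M)` with `r₁ = √((x−M)²+ρ²)`, `r₂ = √((x+M)²+ρ²)`. -/
noncomputable def schwE (M x ρ : ℝ) : ℝ :=
  (Real.sqrt ((x - M)^2 + ρ^2) + Real.sqrt ((x + M)^2 + ρ^2) - 2*M) /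
  (Real.sqrt ((x - M)^2 + ρ^2) + Real.sqrt ((x + M)^2 + ρ^2) + 2*M)

/-- The logarithm `ω₀ = log E₀` of the Schwarzschild Ernst potential. -/
noncomputable def schwOmega (M x ρ : ℝ) : ℝ := Real.log (schwE M x ρ)

/-- The periodic Schwarzschild Ernst potential with mass `M` and period `L`:
`E(x,ρ) = E₀(x,ρ) ∏_{n=1}^∞ E₀(x+nL,ρ) E₀(x−nL,ρ) exp(4M/(nL))`. -/
noncomputable def perE (M L x ρ : ℝ) : ℝ :=
  schwE M x ρ * ∏' n : ℕ,
    (schwE M (x + ((n : ℝ) + 1) * L) ρ * schwE M (x - ((n : ℝ) + 1) * L) ρ *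
      Real.exp (4*M / (((n : ℝ) + 1) * L)))

/-- The logarithm of the periodic Schwarzschild Ernst potential:
`ω(x,ρ) = ω₀(x,ρ) + ∑_{n=1}^∞ [ω₀(x+nL,ρ) + ω₀(x−nL,ρ) + 4M/(nL)]`. -/
noncomputable def perOmega (M L x ρ : ℝ) : ℝ :=
  schwOmega M x ρ + ∑' n : ℕ,
    (schwOmega M (x + ((n : ℝ) + 1) * L) ρ + schwOmega M (x - ((n : ℝ) + 1) * L) ρ +
      4*M / (((n : ℝ) + 1) * L))

private lemma abs_le_sqrt_aux (a ρ : ℝ) : |a| ≤ Real.sqrt (a^2 + ρ^2) := by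
  rw [← Real.sqrt_sq_eq_abs]
  exact Real.sqrt_le_sqrt (by nlinarith [sq_nonneg ρ])

private lemma sqrt_le_aux (a ρ : ℝ) (hρ : 0 ≤ ρ) : Real.sqrt (a^2 + ρ^2) ≤ |a| + ρ := by
  have h : Real.sqrt (a^2 + ρ^2) ≤ Real.sqrt ((|a| + ρ)^2) :=
    Real.sqrt_le_sqrt (by nlinarith [abs_nonneg a, sq_abs a])
  rwa [Real.sqrt_sq (by positivity)] at h

private lemma schwE_pos {M y ρ : ℝ} (hM : 0 < M) (h : 0 < ρ ∨ M < |y|) : 0 < schwE M y ρ := by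
  have h1 := abs_le_sqrt_aux (y - M) ρ
  have h2 := abs_le_sqrt_aux (y + M) ρ
  have hs1 : 0 ≤ Real.sqrt ((y-M)^2 + ρ^2) := Real.sqrt_nonneg _
  have hs2 : 0 ≤ Real.sqrt ((y+M)^2 + ρ^2) := Real.sqrt_nonneg _
  have hden : 0 < Real.sqrt ((y-M)^2 + ρ^2) + Real.sqrt ((y+M)^2 + ρ^2) + 2*M := by linarith
  apply div_pos _ hden
  have hMabs : 2*M ≤ |y - M| + |y + M| := by
    have h3 := abs_add_le (y + M) (-(y - M))
    rw [abs_neg] at h3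
    have h4 : |2*M| = 2*M := abs_of_pos (by linarith)
    have h5 : (y + M) + (-(y - M)) = 2*M := by ring
    rw [h5, h4] at h3
    linarith
  rcases h with hρ | hy
  · have s1 : |y - M| < Real.sqrt ((y-M)^2 + ρ^2) := by
      rw [← Real.sqrt_sq_eq_abs]
      exact Real.sqrt_lt_sqrt (sq_nonneg _) (by nlinarith)
    have s2 : |y + M| < Real.sqrt ((y+M)^2 + ρ^2) := by
      rw [← Real.sqrt_sq_eq_abs]
      exact Real.sqrt_lt_sqrt (sq_nonneg _) (by nlinarith)
    linarith
  · have h2y : 2*|y| ≤ |y - M| + |y + M| := by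
      have h3 := abs_add_le (y - M) (y + M)
      have h5 : (y - M) + (y + M) = 2*y := by ring
      rw [h5, abs_mul, abs_two] at h3
      linarith
    linarith

private lemma schwE_zero {M y : ℝ} (hM : 0 < M) (h : |y| ≤ M) : schwE M y 0 = 0 := by
  obtain ⟨hy1, hy2⟩ := abs_le.mp h
  have h1 : Real.sqrt ((y - M)^2 + 0^2) = M - y := by
    rw [show (y - M)^2 + 0^2 = (M - y)^2 by ring, Real.sqrt_sq (by linarith)]
  have h2 : Real.sqrt ((y + M)^2 + 0^2) = y + M := by
    rw [show (0:ℝ)^2 = 0 by norm_num, add_zero, Real.sqrt_sq (by linarith)]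
  rw [schwE, h1, h2, show M - y + (y + M) - 2*M = 0 by ring, zero_div]

private lemma R_lb {M y ρ : ℝ} :
    2*|y| ≤ Real.sqrt ((y-M)^2 + ρ^2) + Real.sqrt ((y+M)^2 + ρ^2) := by
  have h1 := abs_le_sqrt_aux (y - M) ρ
  have h2 := abs_le_sqrt_aux (y + M) ρ
  have h3 := abs_add_le (y - M) (y + M)
  rw [show (y - M) + (y + M) = 2*y by ring, abs_mul, abs_two] at h3
  linarith

private lemma omega_bound {M ρ y : ℝ} (hM : 0 < M) (hρ : 0 ≤ ρ) (hy : 2*M ≤ |y|) :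
    abs (schwOmega M y ρ + 2*M/|y|) ≤ (4*M^2 + 2*M*ρ)/y^2 := by
  set r1 := Real.sqrt ((y-M)^2 + ρ^2) with hr1
  set r2 := Real.sqrt ((y+M)^2 + ρ^2) with hr2
  set s := |y| with hs
  have hs0 : 0 < s := lt_of_lt_of_le (by linarith) hy
  have hRlb : 2*s ≤ r1 + r2 := R_lb
  have hRub : r1 + r2 ≤ 2*s + 2*M + 2*ρ := by
    have h1 := sqrt_le_aux (y - M) ρ hρ
    have h2 := sqrt_le_aux (y + M) ρ hρ
    have h3 : |y - M| + |y + M| ≤ 2*s + 2*M := by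
      rcases abs_cases y with ⟨h, _⟩ | ⟨h, _⟩ <;> rcases abs_cases (y - M) with ⟨ha, _⟩ | ⟨ha, _⟩ <;>
        rcases abs_cases (y + M) with ⟨hb, _⟩ | ⟨hb, _⟩ <;> rw [hs] <;> linarith
    linarith
  have hnum : 0 < r1 + r2 - 2*M := by linarith
  have hden : 0 < r1 + r2 + 2*M := by linarith
  have hω : schwOmega M y ρ = Real.log (r1 + r2 - 2*M) - Real.log (r1 + r2 + 2*M) := by
    rw [schwOmega, schwE, ← hr1, ← hr2, Real.log_div hnum.ne' hden.ne']
  set g := Real.log (r1 + r2 + 2*M) - Real.log (r1 + r2 - 2*M) with hg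
  have hg1 : g ≤ 4*M/(r1 + r2 - 2*M) := by
    have h := Real.log_le_sub_one_of_pos (div_pos hden hnum)
    rw [Real.log_div hden.ne' hnum.ne'] at h
    have he : (r1 + r2 + 2*M)/(r1 + r2 - 2*M) - 1 = 4*M/(r1 + r2 - 2*M) := by
      field_simp; ring
    linarith
  have hg2 : 4*M/(r1 + r2 + 2*M) ≤ g := by
    have h := Real.log_le_sub_one_of_pos (div_pos hnum hden)
    rw [Real.log_div hnum.ne' hden.ne'] at h
    have he : (r1 + r2 - 2*M)/(r1 + r2 + 2*M) - 1 = -(4*M/(r1 + r2 + 2*M)) := by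
      field_simp; ring
    linarith
  have key1 : g ≤ 2*M/s + (4*M^2 + 2*M*ρ)/s^2 := by
    have b1 : 4*M/(r1 + r2 - 2*M) ≤ 4*M/(2*s - 2*M) :=
      div_le_div_of_nonneg_left (by positivity) (by linarith) (by linarith)
    have e : 2*M/s + (4*M^2 + 2*M*ρ)/s^2 = (2*M*s + (4*M^2 + 2*M*ρ))/s^2 := by
      field_simp
    have b2 : 4*M/(2*s - 2*M) ≤ (2*M*s + (4*M^2 + 2*M*ρ))/s^2 := by
      rw [div_le_div_iff₀ (by linarith) (by positivity)]
      nlinarith [mul_nonneg (mul_nonneg hM.le hρ) (show (0:ℝ) ≤ s - M by linarith),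
        mul_nonneg (mul_nonneg hM.le hM.le) (show (0:ℝ) ≤ s - 2*M by linarith)]
    rw [e]; linarith
  have key2 : 2*M/s ≤ g + (4*M^2 + 2*M*ρ)/s^2 := by
    have b1 : 4*M/(2*s + 4*M + 2*ρ) ≤ 4*M/(r1 + r2 + 2*M) :=
      div_le_div_of_nonneg_left (by positivity) (by linarith) (by linarith)
    have e : 2*M/s - (4*M^2 + 2*M*ρ)/s^2 = (2*M*s - (4*M^2 + 2*M*ρ))/s^2 := by
      field_simp
    have b2 : (2*M*s - (4*M^2 + 2*M*ρ))/s^2 ≤ 4*M/(2*s + 4*M + 2*ρ) := by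
      rw [div_le_div_iff₀ (by positivity) (by positivity)]
      nlinarith
    have : 2*M/s - (4*M^2 + 2*M*ρ)/s^2 ≤ g := by rw [e]; linarith
    linarith
  have hy2 : y^2 = s^2 := (sq_abs y).symm
  have hgg : Real.log (r1 + r2 - 2*M) - Real.log (r1 + r2 + 2*M) = -g := by rw [hg]; ring
  rw [hω, hy2, hgg, abs_le]
  constructor
  · linarith
  · linarith

set_option maxHeartbeats 1600000 in
private lemma term_bound {M L x ρ : ℝ} (hM : 0 < M) (hρ : 0 ≤ ρ)
    {t : ℝ} (hL0 : 0 < L) (htL : L ≤ t) (ht : 2*|x| + 4*M ≤ t) :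
    abs (schwOmega M (x + t) ρ + schwOmega M (x - t) ρ + 4*M/t) ≤
      (8*(4*M^2 + 2*M*ρ) + 16*M*x^2/L) / t^2 := by
  have ht0 : 0 < t := lt_of_lt_of_le hL0 htL
  have hxabs : 0 ≤ |x| := abs_nonneg x
  have hx1 : -|x| ≤ x := neg_abs_le x
  have hx2 : x ≤ |x| := le_abs_self x
  have hu0 : 0 < x + t := by linarith
  have hv0 : 0 < t - x := by linarith
  have hu : |x + t| = x + t := abs_of_pos hu0
  have hv : |x - t| = t - x := by rw [abs_sub_comm, abs_of_pos hv0]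
  have huhalf : t ≤ 2*(x + t) := by linarith
  have hvhalf : t ≤ 2*(t - x) := by linarith
  have hbu := omega_bound hM hρ (y := x + t) (by rw [hu]; linarith)
  have hbv := omega_bound hM hρ (y := x - t) (by rw [hv]; linarith)
  rw [hu] at hbu
  rw [hv] at hbv
  have hC : 0 < 4*M^2 + 2*M*ρ := by nlinarith
  -- convert bounds to t-denominators
  have hbu2 : (4*M^2 + 2*M*ρ)/(x+t)^2 ≤ 4*(4*M^2 + 2*M*ρ)/t^2 := by
    rw [div_le_div_iff₀ (by positivity) (by positivity)]
    nlinarith [mul_le_mul huhalf huhalf ht0.le (by linarith : (0:ℝ) ≤ 2*(x+t)), hC.le]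
  have hbv2 : (4*M^2 + 2*M*ρ)/(x-t)^2 ≤ 4*(4*M^2 + 2*M*ρ)/t^2 := by
    rw [show (x-t)^2 = (t-x)^2 by ring,
      div_le_div_iff₀ (by nlinarith : (0:ℝ) < (t-x)^2) (by positivity)]
    nlinarith [mul_le_mul hvhalf hvhalf ht0.le (by linarith : (0:ℝ) ≤ 2*(t-x)), hC.le]
  -- third term
  have hxx : 4*x^2 ≤ t^2 := by nlinarith [sq_abs x]
  have hcomb : 2*M/(x+t) + 2*M/(t-x) = 4*M*t/((x+t)*(t-x)) := by
    field_simp; ring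
  have hc1 : 4*M/t ≤ 4*M*t/((x+t)*(t-x)) := by
    rw [div_le_div_iff₀ ht0 (mul_pos hu0 hv0)]
    nlinarith [mul_nonneg hM.le (sq_nonneg x)]
  have hc2 : 4*M*t/((x+t)*(t-x)) ≤ 4*M/t + (16*M*x^2/L)/t^2 := by
    have e : 4*M/t + (16*M*x^2/L)/t^2 = (4*M*t*L + 16*M*x^2)/(L*t^2) := by
      field_simp
    rw [e, div_le_div_iff₀ (mul_pos hu0 hv0) (mul_pos hL0 (by positivity))]
    have h1 : L*(4*M*t*x^2) ≤ t*(4*M*t*x^2) :=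
      mul_le_mul_of_nonneg_right htL (by positivity)
    have h2 : (4*x^2)*(4*M*x^2) ≤ t^2*(4*M*x^2) :=
      mul_le_mul_of_nonneg_right hxx (by positivity)
    have h3 : (0:ℝ) ≤ M*t^2*x^2 := by positivity
    nlinarith [h1, h2, h3]
  have hc : abs (4*M/t - 2*M/(x+t) - 2*M/(t-x)) ≤ (16*M*x^2/L)/t^2 := by
    rw [abs_le]
    constructor <;> linarith [hcomb, hc1, hc2]
  have e2 : schwOmega M (x + t) ρ + schwOmega M (x - t) ρ + 4*M/t =
      (schwOmega M (x + t) ρ + 2*M/(x+t)) + (schwOmega M (x - t) ρ + 2*M/(t-x)) +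
      (4*M/t - 2*M/(x+t) - 2*M/(t-x)) := by ring
  rw [e2]
  calc abs _ ≤ abs ((schwOmega M (x + t) ρ + 2*M/(x+t)) + (schwOmega M (x - t) ρ + 2*M/(t-x))) +
      abs (4*M/t - 2*M/(x+t) - 2*M/(t-x)) := abs_add_le _ _
    _ ≤ abs (schwOmega M (x + t) ρ + 2*M/(x+t)) + abs (schwOmega M (x - t) ρ + 2*M/(t-x)) +
      abs (4*M/t - 2*M/(x+t) - 2*M/(t-x)) := by linarith [abs_add_le (schwOmega M (x + t) ρ + 2*M/(x+t)) (schwOmega M (x - t) ρ + 2*M/(t-x))]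
    _ ≤ 4*(4*M^2 + 2*M*ρ)/t^2 + 4*(4*M^2 + 2*M*ρ)/t^2 + (16*M*x^2/L)/t^2 := by
        have b1 := le_trans hbu hbu2
        have b2 := le_trans hbv hbv2
        linarith
    _ = (8*(4*M^2 + 2*M*ρ) + 16*M*x^2/L) / t^2 := by ring

set_option maxHeartbeats 1600000 in
private lemma summable_aux (M L x ρ : ℝ) (hM : 0 < M) (hL : 2*M < L) (hρ : 0 ≤ ρ) :
    Summable (fun n : ℕ => schwOmega M (x + ((n:ℝ)+1)*L) ρ + schwOmega M (x - ((n:ℝ)+1)*L) ρ +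
      4*M/(((n:ℝ)+1)*L)) := by
  have hL0 : 0 < L := by linarith
  obtain ⟨N, hN⟩ := exists_nat_ge ((2*|x| + 4*M)/L)
  have hNL : 2*|x| + 4*M ≤ (N:ℝ)*L := by
    rw [div_le_iff₀ hL0] at hN; linarith
  set C : ℝ := 8*(4*M^2 + 2*M*ρ) + 16*M*x^2/L with hC
  have hC0 : 0 ≤ C := by
    have h1 : 0 ≤ 16*M*x^2/L := by positivity
    rw [hC]; nlinarith
  rw [← summable_nat_add_iff N]
  have hg : Summable (fun n : ℕ => (C/L^2) / ((n:ℝ)+1)^2) := by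
    have h0 : Summable (fun n : ℕ => 1 / ((n:ℝ))^2) :=
      Real.summable_one_div_nat_pow.mpr one_lt_two
    have h1 := (summable_nat_add_iff 1).mpr h0
    have h2 : Summable (fun n : ℕ => 1 / ((n:ℝ)+1)^2) := by
      refine h1.congr fun n => ?_
      push_cast
      ring
    refine (h2.mul_left (C/L^2)).congr fun n => ?_
    field_simp
  refine Summable.of_norm_bounded hg fun n => ?_
  have hcast : ((n + N : ℕ):ℝ) + 1 = (n:ℝ) + (N:ℝ) + 1 := by push_cast; ring
  set t : ℝ := (((n + N : ℕ):ℝ) + 1) * L with hts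
  have hn0 : (0:ℝ) ≤ (n:ℝ) := Nat.cast_nonneg n
  have htL : L ≤ t := by
    rw [hts, hcast]; nlinarith
  have hco : 2*|x| + 4*M ≤ t := by
    rw [hts, hcast]
    have : (N:ℝ)*L ≤ ((n:ℝ) + (N:ℝ) + 1)*L := by nlinarith
    linarith
  have hb := term_bound hM hρ hL0 htL hco
  rw [Real.norm_eq_abs]
  refine le_trans hb ?_
  rw [div_div]
  apply div_le_div_of_nonneg_left hC0 (by positivity)
  rw [hts, hcast]
  have h1 : ((n:ℝ)+1)*L ≤ ((n:ℝ) + (N:ℝ) + 1)*L := by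
    apply mul_le_mul_of_nonneg_right _ hL0.le
    have : (0:ℝ) ≤ (N:ℝ) := Nat.cast_nonneg N
    linarith
  calc L^2 * ((n:ℝ)+1)^2 = (((n:ℝ)+1)*L)^2 := by ring
    _ ≤ (((n:ℝ) + (N:ℝ) + 1)*L)^2 := by
        apply pow_le_pow_left₀ (by positivity) h1


private lemma tprod_zero_of {f : ℕ → ℝ} (i : ℕ) (h : f i = 0) : ∏' n, f n = 0 := by
  have hp : HasProd f 0 := by
    have he : (fun s : Finset ℕ => ∏ n ∈ s, f n) =ᶠ[Filter.atTop] fun _ => 0 := by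
      filter_upwards [Filter.eventually_ge_atTop ({i} : Finset ℕ)] with s hs
      exact Finset.prod_eq_zero (hs (Finset.mem_singleton_self i)) h
    exact Filter.Tendsto.congr' he.symm tendsto_const_nhds
  exact hp.tprod_eq

private lemma perE_pos_aux (M L x ρ : ℝ) (hM : 0 < M) (hL : 2*M < L) (hρ : 0 ≤ ρ)
    (h : ∀ k : ℤ, 0 < ρ ∨ M < |x - k*L|) : 0 < perE M L x ρ := by
  have hpt : ∀ k : ℤ, 0 < schwE M (x - k*L) ρ := fun k => schwE_pos hM (h k)
  have h0 : 0 < schwE M x ρ := by simpa using hpt 0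
  have hplus : ∀ n : ℕ, 0 < schwE M (x + ((n:ℝ)+1)*L) ρ := by
    intro n
    have := hpt (-(n+1))
    push_cast at this
    rw [show x - -((n:ℝ)+1)*L = x + ((n:ℝ)+1)*L by ring] at this
    exact this
  have hminus : ∀ n : ℕ, 0 < schwE M (x - ((n:ℝ)+1)*L) ρ := by
    intro n
    have := hpt (n+1)
    push_cast at this
    exact this
  have hsum := summable_aux M L x ρ hM hL hρ
  have hprod := hsum.hasSum.rexp
  have heq : (Real.exp ∘ fun n : ℕ => schwOmega M (x + ((n:ℝ)+1)*L) ρ +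
      schwOmega M (x - ((n:ℝ)+1)*L) ρ + 4*M/(((n:ℝ)+1)*L)) =
      fun n : ℕ => schwE M (x + ((n:ℝ)+1)*L) ρ * schwE M (x - ((n:ℝ)+1)*L) ρ *
        Real.exp (4*M/(((n:ℝ)+1)*L)) := by
    funext n
    simp only [Function.comp_apply, Real.exp_add, schwOmega,
      Real.exp_log (hplus n), Real.exp_log (hminus n)]
  rw [heq] at hprod
  rw [perE, hprod.tprod_eq]
  exact mul_pos h0 (Real.exp_pos _)

/-- For `M > 0` and `L > 2M`, the periodic Schwarzschild Ernst potential `E`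
satisfies: `E(x,ρ) > 0` whenever `ρ > 0`; `E(x,0) > 0` whenever `M < |x − nL|` for all `n ∈ ℤ`;
and `E(x,0) = 0` whenever `|x − nL| < M` for some `n ∈ ℤ` (on the event horizons). -/
theorem statement5 (M L : ℝ) (hM : 0 < M) (hL : 2*M < L) :
    (∀ x ρ : ℝ, 0 < ρ → 0 < perE M L x ρ) ∧
    (∀ x : ℝ, (∀ n : ℤ, M < |x - n * L|) → 0 < perE M L x 0) ∧
    (∀ x : ℝ, (∃ n : ℤ, |x - n * L| < M) → perE M L x 0 = 0) := by
  refine ⟨?_, ?_, ?_⟩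
  · intro x ρ hρ
    exact perE_pos_aux M L x ρ hM hL hρ.le fun k => Or.inl hρ
  · intro x hx
    exact perE_pos_aux M L x 0 hM hL le_rfl fun k => Or.inr (hx k)
  · rintro x ⟨n, hn⟩
    rcases eq_or_ne n 0 with rfl | hne
    · rw [perE, schwE_zero hM (by simpa using hn.le), zero_mul]
    · rw [perE]
      set m := n.natAbs with hm
      have hm1 : 1 ≤ m := Int.natAbs_pos.mpr hne
      have hcast : ((m - 1 : ℕ):ℝ) + 1 = (m:ℝ) := by
        rw [Nat.cast_sub hm1, Nat.cast_one]; ring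
      have hmabs : ((m:ℕ):ℝ) = |(n:ℝ)| := by
        rw [hm, Nat.cast_natAbs, Int.cast_abs]
      have hfac : schwE M (x + (((m-1:ℕ):ℝ)+1)*L) 0 * schwE M (x - (((m-1:ℕ):ℝ)+1)*L) 0 *
          Real.exp (4*M/((((m-1:ℕ):ℝ)+1)*L)) = 0 := by
        rw [hcast, hmabs]
        rcases le_or_gt 0 n with hn0 | hn0
        · rw [abs_of_nonneg (by exact_mod_cast hn0 : (0:ℝ) ≤ (n:ℝ)),
            schwE_zero hM hn.le, mul_zero, zero_mul]
        · rw [abs_of_neg (by exact_mod_cast hn0 : ((n:ℝ)) < 0),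
            show x + -(n:ℝ)*L = x - (n:ℝ)*L by ring,
            schwE_zero hM hn.le, zero_mul, zero_mul]
      rw [tprod_zero_of (m-1) hfac, mul_zero]
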